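/- If K ↪ J is an interval inclusion in an operator category Φ and j ∈ |J| is a point, then the fiber K_j is either a terminal object of Φ or has empty point set |K_j| = ∅. -/
import Mathlib

open CategoryTheory Limits

universe v u v' u'

/-- An operator category: an essentially small category with a terminal object,
fibers of morphisms over points, and finite hom-sets. -/
class OperatorCategory (C : Type u) [Category.{v} C] where
  /-- a chosen terminal object -/
  One : C
  isTerminalOne : IsTerminal One
  fibers : ∀ {J I : C} (f : J ⟶ I) (i : One ⟶ I), HasPullback i f
  finiteHom : ∀ I J : C, Finite (I ⟶ J)
  essSmall : EssentiallySmall.{v} C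

variable {C : Type u} [Category.{v} C] [OperatorCategory C]

/-- A fiber inclusion: a morphism that is a pullback of a point `{i} → I`
along some morphism `J → I`. -/
def IsFiberInclusion {K J : C} (k : K ⟶ J) : Prop :=
  ∃ (I : C) (f : J ⟶ I) (i : (OperatorCategory.One : C) ⟶ I),
    IsPullback k (OperatorCategory.isTerminalOne.from K) f i

/-- An interval inclusion: a finite composite of fiber inclusions. -/
inductive IsIntervalInclusion : ∀ {K J : C}, (K ⟶ J) → Prop
  | id (J : C) : IsIntervalInclusion (𝟙 J)
  | comp {L K J : C} {g : L ⟶ K} {f : K ⟶ J} :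
      IsFiberInclusion f → IsIntervalInclusion g → IsIntervalInclusion (g ≫ f)

/-- Points `1 ⟶ I` are monomorphisms. -/
lemma mono_point {I : C} (i : (OperatorCategory.One : C) ⟶ I) : Mono i := by
  constructor
  intro Z a b _
  exact OperatorCategory.isTerminalOne.hom_ext a b

/-- Fiber inclusions are monomorphisms. -/
lemma IsFiberInclusion.mono {K J : C} {k : K ⟶ J} (h : IsFiberInclusion k) : Mono k := by
  obtain ⟨I, f, i, hpb⟩ := h
  constructor
  intro Z a b hab
  apply hpb.hom_ext hab
  exact OperatorCategory.isTerminalOne.hom_ext _ _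

/-- Interval inclusions are monomorphisms. -/
lemma IsIntervalInclusion.mono {K J : C} {k : K ⟶ J} (h : IsIntervalInclusion k) :
    Mono k := by
  induction h with
  | id => exact inferInstance
  | comp hf hg ih =>
    have := hf.mono
    have := ih
    exact mono_comp _ _

/-- the fiber of an interval inclusion `K ↪ J` over a point
`j ∈ |J|` is either terminal or has empty point set. -/
theorem fiber_of_intervalInclusion_terminal_or_empty {K J : C} {k : K ⟶ J}
    (hk : IsIntervalInclusion k) (j : (OperatorCategory.One : C) ⟶ J)
    {P : C} (p₁ : P ⟶ K) (p₂ : P ⟶ (OperatorCategory.One : C))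
    (hP : IsPullback p₁ p₂ k j) :
    Nonempty (IsTerminal P) ∨ IsEmpty ((OperatorCategory.One : C) ⟶ P) := by
  have hkm : Mono k := hk.mono
  -- p₂ is mono
  have hp₂ : Mono p₂ := by
    constructor
    intro Z a b hab
    apply hP.hom_ext
    · have : a ≫ p₁ ≫ k = b ≫ p₁ ≫ k := by
        rw [hP.w]
        simp only [← Category.assoc, hab]
      rw [← Category.assoc, ← Category.assoc] at this
      exact (cancel_mono k).mp this
    · exact hab
  rcases isEmpty_or_nonempty ((OperatorCategory.One : C) ⟶ P) with he | hx
  · exact Or.inr he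
  · obtain ⟨x⟩ := hx
    refine Or.inl ⟨IsTerminal.ofUniqueHom (fun Z => OperatorCategory.isTerminalOne.from Z ≫ x)
      (fun Z m => ?_)⟩
    have : m ≫ p₂ = (OperatorCategory.isTerminalOne.from Z ≫ x) ≫ p₂ :=
      OperatorCategory.isTerminalOne.hom_ext _ _
    exact (cancel_mono p₂).mp this
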